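/- If G is a subcubic simple graph without isolated vertices satisfying ν_ac(G) < (n(G) − κ_G(K_{2,3}) − κ_G(K_4^+) − 2·κ_G(K_{3,3}))/4 and G has minimum order among all such graphs, then G has no endblock isomorphic to K_{2,3}; that is, there is no set B of five vertices of G inducing a subgraph isomorphic to K_{2,3} such that exactly one vertex of B has a neighbor outside B. -/

import Mathlib

open SimpleGraph

/-- `K4plus` is the graph obtained from `K_4` (on vertices 0,1,2,3) by subdividing
the edge between 0 and 1 once, using 4 as the subdivision vertex. -/
def K4plus : SimpleGraph (Fin 5) :=
  SimpleGraph.fromRel (fun a b =>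
    (a, b) ∈ ([(0,2),(0,3),(1,2),(1,3),(2,3),(0,4),(1,4)] : List (Fin 5 × Fin 5)))

/-- The complete bipartite graph `K_{2,3}`. -/
def K23 : SimpleGraph (Fin 2 ⊕ Fin 3) := completeBipartiteGraph (Fin 2) (Fin 3)

/-- The complete bipartite graph `K_{3,3}`. -/
def K33 : SimpleGraph (Fin 3 ⊕ Fin 3) := completeBipartiteGraph (Fin 3) (Fin 3)

/-- A matching `M` in `G` is acyclic if the subgraph of `G` induced by the set of
vertices incident to an edge of `M` is a forest. -/
def IsAcyclicMatching {V : Type*} (G : SimpleGraph V) (M : G.Subgraph) : Prop :=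
  M.IsMatching ∧ (G.induce M.support).IsAcyclic

/-- The acyclic matching number of `G`: the maximum number of edges of an acyclic
matching in `G`. -/
noncomputable def acyclicMatchingNumber {V : Type*} (G : SimpleGraph V) : ℕ :=
  sSup {k | ∃ M : G.Subgraph, IsAcyclicMatching G M ∧ M.edgeSet.ncard = k}

/-- `kappa G H` is the number of connected components of `G` whose induced subgraph
is isomorphic to `H`. -/
noncomputable def kappa {V W : Type*} (G : SimpleGraph V) (H : SimpleGraph W) : ℕ :=
  Nat.card {c : G.ConnectedComponent // Nonempty ((G.induce c.supp) ≃g H)}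

/-- A graph is subcubic if every vertex has degree at most 3. -/
def Subcubic {V : Type*} (G : SimpleGraph V) : Prop :=
  ∀ v, (G.neighborSet v).ncard ≤ 3

/-- A graph has no isolated vertices if every vertex has a neighbor. -/
def NoIsolatedVerts {V : Type*} (G : SimpleGraph V) : Prop :=
  ∀ v, ∃ w, G.Adj v w

/-- The lower bound `(n(G) - κ_G(K_{2,3}) - κ_G(K_4^+) - 2 κ_G(K_{3,3}))/4`. -/
noncomputable def acmBound {V : Type*} [Fintype V] (G : SimpleGraph V) : ℚ :=
  ((Fintype.card V : ℚ) - kappa G K23 - kappa G K4plus - 2 * kappa G K33) / 4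

/-- `G` is a counterexample of minimum order to the bound
`ν_ac(G) ≥ (n(G) - κ_G(K_{2,3}) - κ_G(K_4^+) - 2 κ_G(K_{3,3}))/4`
among subcubic graphs without isolated vertices. -/
def IsMinCounterexample {V : Type} [Fintype V] (G : SimpleGraph V) : Prop :=
  Subcubic G ∧ NoIsolatedVerts G ∧ (acyclicMatchingNumber G : ℚ) < acmBound G ∧
  ∀ (W : Type) [Fintype W] (H : SimpleGraph W),
    Subcubic H → NoIsolatedVerts H → (acyclicMatchingNumber H : ℚ) < acmBound H →
    Fintype.card V ≤ Fintype.card W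


section Helpers

variable {V : Type*} {G : SimpleGraph V}

/-- Lower a walk of `G` whose support lies in `s` to a walk of `G.induce s`. -/
def lowerWalk (G : SimpleGraph V) (s : Set V) :
    ∀ {a b : V} (p : G.Walk a b) (h : ∀ x ∈ p.support, x ∈ s),
      (G.induce s).Walk ⟨a, h a p.start_mem_support⟩ ⟨b, h b p.end_mem_support⟩
  | _, _, SimpleGraph.Walk.nil, _ => SimpleGraph.Walk.nil
  | a, b, SimpleGraph.Walk.cons hadj q, h =>
      SimpleGraph.Walk.cons (by exact hadj)
        (lowerWalk G s q (fun x hx => h x (by simp [hx])))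

lemma map_lowerWalk (G : SimpleGraph V) (s : Set V) {a b : V} (p : G.Walk a b)
    (h : ∀ x ∈ p.support, x ∈ s) :
    (lowerWalk G s p h).map (SimpleGraph.Embedding.induce s).toHom = p := by
  induction p with
  | nil => rfl
  | cons hadj q ih => exact congrArg (SimpleGraph.Walk.cons hadj) (ih _)

lemma no_cycle_of_isAcyclic_induce {s : Set V} (h : (G.induce s).IsAcyclic) {v : V}
    (c : G.Walk v v) (hc : c.IsCycle) (hsupp : ∀ x ∈ c.support, x ∈ s) : False := by
  have hmap := map_lowerWalk G s c hsupp
  have : (lowerWalk G s c hsupp).IsCycle := by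
    rw [← SimpleGraph.Walk.map_isCycle_iff_of_injective
      (f := (SimpleGraph.Embedding.induce s).toHom) (Subtype.val_injective), hmap]
    exact hc
  exact h _ this

lemma isAcyclic_induce_of_no_cycle {s : Set V}
    (h : ∀ (v : V) (c : G.Walk v v), c.IsCycle → ¬ (∀ x ∈ c.support, x ∈ s)) :
    (G.induce s).IsAcyclic := by
  intro v c hc
  refine h v.1 (c.map (SimpleGraph.Embedding.induce s).toHom)
    (hc.map Subtype.val_injective) ?_
  have key : ∀ x ∈ (c.map (SimpleGraph.Embedding.induce s).toHom).support, x ∈ s := by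
    intro x hx
    rw [SimpleGraph.Walk.support_map, List.mem_map] at hx
    obtain ⟨y, -, rfl⟩ := hx
    exact y.2
  exact key

lemma lowerWalk_support_sub (G : SimpleGraph V) (s : Set V) {a b : V} (p : G.Walk a b)
    (h : ∀ x ∈ p.support, x ∈ s) :
    ∀ x ∈ (lowerWalk G s p h).support, x.1 ∈ p.support := by
  intro x hx
  have hmap := map_lowerWalk G s p h
  have : x.1 ∈ (SimpleGraph.Walk.map (SimpleGraph.Embedding.induce s).toHom
      (lowerWalk G s p h)).support := by
    rw [SimpleGraph.Walk.support_map, List.mem_map]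
    exact ⟨x, hx, rfl⟩
  rwa [hmap] at this

lemma IsCycleTwoNbrs {v x : V} {c : G.Walk v v} (hc : c.IsCycle) (hx : x ∈ c.support) :
    ∃ y z, y ≠ z ∧ G.Adj x y ∧ G.Adj x z ∧ y ∈ c.support ∧ z ∈ c.support := by
  classical
  have hc' : (c.rotate _ hx).IsCycle := hc.rotate hx
  have hrot := SimpleGraph.Walk.support_rotate c _ hx
  obtain ⟨y, hadj, q, he⟩ := SimpleGraph.Walk.not_nil_iff.mp hc'.not_nil
  rw [he] at hc' hrot
  have htail : ∀ w, w ∈ q.support → w ∈ c.support := by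
    intro w hw
    have : w ∈ (SimpleGraph.Walk.cons hadj q).support.tail := by simpa using hw
    exact List.mem_of_mem_tail (hrot.mem_iff.mp this)
  have hlen : 3 ≤ q.length + 1 := by
    simpa using hc'.three_le_length
  have hqnn : ¬ q.reverse.Nil := by
    rw [SimpleGraph.Walk.not_nil_iff_lt_length, SimpleGraph.Walk.length_reverse]
    omega
  obtain ⟨z, hadj2, q2, he2⟩ := SimpleGraph.Walk.not_nil_iff.mp hqnn
  have hcyc := (SimpleGraph.Walk.cons_isCycle_iff q hadj).mp hc'
  refine ⟨y, z, ?_, hadj, hadj2, ?_, ?_⟩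
  · rintro rfl
    apply hcyc.2
    have : s(x, y) ∈ q.reverse.edges := by
      rw [he2]; simp
    rwa [SimpleGraph.Walk.edges_reverse, List.mem_reverse] at this
  · exact htail y q.start_mem_support
  · refine htail z ?_
    have : z ∈ q.reverse.support := by rw [he2]; simp
    rwa [SimpleGraph.Walk.support_reverse, List.mem_reverse] at this

lemma walk_support_closed {s : Set V} (hcl : ∀ a ∈ s, ∀ b, G.Adj a b → b ∈ s)
    {x y : V} (p : G.Walk x y) (hx : x ∈ s) : ∀ z ∈ p.support, z ∈ s := by
  induction p with
  | nil => intro z hz; simp at hz; rwa [hz]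
  | cons hadj q ih =>
    intro z hz
    rw [SimpleGraph.Walk.support_cons, List.mem_cons] at hz
    rcases hz with rfl | hz
    · exact hx
    · exact ih (hcl _ hx _ hadj) z hz

lemma reachable_induce_of_closed {s : Set V} (hcl : ∀ a ∈ s, ∀ b, G.Adj a b → b ∈ s)
    {x y : V} (hx : x ∈ s) (hr : G.Reachable x y) :
    ∃ (hy : y ∈ s), (G.induce s).Reachable ⟨x, hx⟩ ⟨y, hy⟩ := by
  obtain ⟨p⟩ := hr
  have hsupp := walk_support_closed hcl p hx
  exact ⟨hsupp y p.end_mem_support, ⟨lowerWalk G s p hsupp⟩⟩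

/-- `(G.induce s).induce t` is isomorphic to `G.induce (val '' t)`. -/
def induceInduceIso (G : SimpleGraph V) (s : Set V) (t : Set s) :
    ((G.induce s).induce t) ≃g (G.induce (Subtype.val '' t)) where
  toFun x := ⟨x.1.1, ⟨x.1, x.2, rfl⟩⟩
  invFun x := ⟨⟨x.1, by obtain ⟨y, hy, he⟩ := x.2; exact he ▸ y.2⟩, by
    obtain ⟨y, hy, he⟩ := x.2
    have : (⟨x.1, he ▸ y.2⟩ : s) = y := Subtype.ext he.symm
    rw [this]; exact hy⟩
  left_inv x := by ext; rfl
  right_inv x := by ext; rfl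
  map_rel_iff' := Iff.rfl

lemma isAcyclic_of_iso {W : Type*} {G' : SimpleGraph W} (e : G ≃g G') (h : G'.IsAcyclic) :
    G.IsAcyclic := by
  intro v c hc
  exact h (c.map e.toHom) (hc.map e.injective)

lemma ncard_neighborSet_eq_of_iso {W : Type*} {G' : SimpleGraph W} (e : G ≃g G') (v : V) :
    (G.neighborSet v).ncard = (G'.neighborSet (e v)).ncard := by
  rw [← Nat.card_coe_set_eq, ← Nat.card_coe_set_eq]
  exact Nat.card_congr (e.mapNeighborSet v)

lemma ncard_neighborSet_induce_le [Finite V] (s : Set V) (x : s) :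
    ((G.induce s).neighborSet x).ncard ≤ (G.neighborSet x.1).ncard := by
  rw [← Nat.card_coe_set_eq, ← Nat.card_coe_set_eq]
  refine Nat.card_le_card_of_injective
    (fun y => ⟨y.1.1, y.2⟩ : (G.induce s).neighborSet x → G.neighborSet x.1) ?_
  intro a b hab
  ext
  simpa [Subtype.ext_iff] using hab

lemma two_le_ncard_of_two_nbrs {W : Type*} [Finite W] {H : SimpleGraph W} {w : W}
    (h : ∃ y z, y ≠ z ∧ H.Adj w y ∧ H.Adj w z) : 2 ≤ (H.neighborSet w).ncard := by
  obtain ⟨y, z, hyz, hy, hz⟩ := h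
  have : 1 < (H.neighborSet w).ncard := by
    rw [Set.one_lt_ncard_iff (Set.toFinite _)]
    exact ⟨y, z, hy, hz, hyz⟩
  omega

noncomputable def kappa' {V W : Type*} (G : SimpleGraph V) (H : SimpleGraph W) : ℕ :=
  Nat.card {c : G.ConnectedComponent // Nonempty ((G.induce c.supp) ≃g H)}

lemma kappa_le {V : Type} [Fintype V] (G : SimpleGraph V) (s : Set V) (u : V) (hu : u ∈ s)
    (hclose : ∀ a ∈ s, a ≠ u → ∀ b, G.Adj a b → b ∈ s)
    (hdeg : ((G.induce s).neighborSet ⟨u, hu⟩).ncard ≤ 1)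
    {W : Type*} (H₀ : SimpleGraph W) (hH₀ : ∀ w, 2 ≤ (H₀.neighborSet w).ncard) :
    kappa' (G.induce s) H₀ ≤ kappa' G H₀ := by
  classical
  set H := G.induce s with hH
  -- the component in `G` associated to an exceptional component of `H`
  have main : ∀ c : H.ConnectedComponent, Nonempty ((H.induce c.supp) ≃g H₀) →
      ∃ c' : G.ConnectedComponent, c'.supp = Subtype.val '' c.supp ∧
        Nonempty ((G.induce c'.supp) ≃g H₀) := by
    intro c ⟨ψ⟩
    -- `u` is not in the component
    have hu_not : (⟨u, hu⟩ : s) ∉ c.supp := by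
      intro hmem
      have h1 : 2 ≤ ((H.induce c.supp).neighborSet ⟨⟨u, hu⟩, hmem⟩).ncard := by
        rw [ncard_neighborSet_eq_of_iso ψ]
        exact hH₀ _
      have h2 : ((H.induce c.supp).neighborSet ⟨⟨u, hu⟩, hmem⟩).ncard ≤
          (H.neighborSet ⟨u, hu⟩).ncard := ncard_neighborSet_induce_le _ _
      omega
    -- the image of the component is closed under `G`-adjacency
    have hDcl : ∀ a ∈ Subtype.val '' c.supp, ∀ b, G.Adj a b → b ∈ Subtype.val '' c.supp := by
      rintro a ⟨x, hx, rfl⟩ b hadj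
      have hxu : x.1 ≠ u := by
        intro h
        apply hu_not
        have : x = ⟨u, hu⟩ := Subtype.ext h
        rwa [← this]
      have hb : b ∈ s := hclose x.1 x.2 hxu b hadj
      have hadj' : H.Adj x ⟨b, hb⟩ := by exact hadj
      refine ⟨⟨b, hb⟩, ?_, rfl⟩
      rw [SimpleGraph.ConnectedComponent.mem_supp_iff] at hx ⊢
      rw [← hx]
      exact SimpleGraph.ConnectedComponent.sound hadj'.symm.reachable
    obtain ⟨x₀, hx₀⟩ := c.exists_rep
    have hx₀m : x₀ ∈ c.supp := by rwa [SimpleGraph.ConnectedComponent.mem_supp_iff]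
    have hsupp : (G.connectedComponentMk x₀.1).supp = Subtype.val '' c.supp := by
      ext y
      constructor
      · intro hy
        rw [SimpleGraph.ConnectedComponent.mem_supp_iff] at hy
        have hr : G.Reachable x₀.1 y := (SimpleGraph.ConnectedComponent.eq.mp hy).symm
        obtain ⟨p⟩ := hr
        exact walk_support_closed hDcl p ⟨x₀, hx₀m, rfl⟩ y p.end_mem_support
      · rintro ⟨x, hx, rfl⟩
        rw [SimpleGraph.ConnectedComponent.mem_supp_iff] at hx ⊢
        have hr : H.Reachable x x₀ := SimpleGraph.ConnectedComponent.eq.mp (hx.trans hx₀.symm)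
        exact SimpleGraph.ConnectedComponent.sound
          (hr.map (SimpleGraph.Embedding.induce s).toHom)
    refine ⟨G.connectedComponentMk x₀.1, hsupp, ⟨?_⟩⟩
    rw [hsupp]
    exact (induceInduceIso G s c.supp).symm.trans ψ
  -- now build the injection between the two subtypes
  haveI : Finite G.ConnectedComponent := Quot.finite _
  choose f hf1 hf2 using main
  refine Nat.card_le_card_of_injective
    (fun c => ⟨f c.1 c.2, hf2 c.1 c.2⟩ :
      {c : H.ConnectedComponent // Nonempty ((H.induce c.supp) ≃g H₀)} →
      {c : G.ConnectedComponent // Nonempty ((G.induce c.supp) ≃g H₀)}) ?_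
  rintro ⟨c₁, h₁⟩ ⟨c₂, h₂⟩ hc
  have : f c₁ h₁ = f c₂ h₂ := congrArg Subtype.val hc
  have hsupp : Subtype.val '' c₁.supp = Subtype.val '' c₂.supp := by
    rw [← hf1 c₁ h₁, ← hf1 c₂ h₂, this]
  have : c₁.supp = c₂.supp := Set.image_injective.mpr Subtype.val_injective hsupp
  exact Subtype.ext (SimpleGraph.ConnectedComponent.supp_injective this)

lemma edgeSet_map' {V W : Type*} {G : SimpleGraph V} {G' : SimpleGraph W} (f : G →g G')
    (M : G.Subgraph) : (SimpleGraph.Subgraph.map f M).edgeSet = Sym2.map f '' M.edgeSet := by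
  ext e
  refine Sym2.ind (fun x y => ?_) e
  simp only [SimpleGraph.Subgraph.mem_edgeSet, SimpleGraph.Subgraph.map_adj, Relation.Map,
    Set.mem_image]
  constructor
  · rintro ⟨a, b, hab, rfl, rfl⟩
    exact ⟨s(a, b), hab, rfl⟩
  · rintro ⟨e', he', hmap⟩
    revert he' hmap
    refine Sym2.ind (fun a b => ?_) e'
    intro hab hmap
    rw [Sym2.map_pair_eq, Sym2.eq_iff] at hmap
    rcases hmap with ⟨rfl, rfl⟩ | ⟨rfl, rfl⟩
    · exact ⟨a, b, hab, rfl, rfl⟩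
    · exact ⟨b, a, hab.symm, rfl, rfl⟩

noncomputable def acm' {V : Type*} (G : SimpleGraph V) : ℕ :=
  sSup {k | ∃ M : G.Subgraph, (M.IsMatching ∧ (G.induce M.support).IsAcyclic) ∧
    M.edgeSet.ncard = k}

lemma acm_set_nonempty {V : Type*} (G : SimpleGraph V) :
    {k | ∃ M : G.Subgraph, (M.IsMatching ∧ (G.induce M.support).IsAcyclic) ∧
      M.edgeSet.ncard = k}.Nonempty := by
  refine ⟨_, ⊥, ⟨?_, ?_⟩, rfl⟩
  · intro v hv
    simp [SimpleGraph.Subgraph.verts_bot] at hv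
  · intro v c hc
    obtain ⟨w, hw⟩ := (SimpleGraph.Subgraph.mem_support _).mp v.2
    simp at hw

lemma acm_set_bddAbove {V : Type*} [Fintype V] (G : SimpleGraph V) :
    BddAbove {k | ∃ M : G.Subgraph, (M.IsMatching ∧ (G.induce M.support).IsAcyclic) ∧
      M.edgeSet.ncard = k} := by
  classical
  refine ⟨Nat.card (Sym2 V), ?_⟩
  rintro k ⟨M, -, rfl⟩
  have : M.edgeSet.ncard ≤ (Set.univ : Set (Sym2 V)).ncard :=
    Set.ncard_le_ncard (Set.subset_univ _) Set.finite_univ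
  rwa [Set.ncard_univ] at this

lemma acm_lift {V : Type} [Fintype V] (G : SimpleGraph V) (s : Set V) (a1 b1 u : V)
    (ha1 : a1 ∉ s) (hb1 : b1 ∉ s) (hab : G.Adj a1 b1)
    (hnb1 : ∀ w, G.Adj b1 w → (w = a1 ∨ w ∉ s))
    (hna1 : ∀ w, G.Adj a1 w → (w = b1 ∨ w = u ∨ w ∉ s)) :
    acm' (G.induce s) + 1 ≤ acm' G := by
  classical
  set H := G.induce s with hHdef
  obtain ⟨M', ⟨hM'match, hM'acyc⟩, hM'card⟩ :=
    Nat.sSup_mem (acm_set_nonempty H) (acm_set_bddAbove H)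
  set ι : H ↪g G := SimpleGraph.Embedding.induce s with hι
  set M : G.Subgraph := SimpleGraph.Subgraph.map ι.toHom M' ⊔ G.subgraphOfAdj hab with hM
  have hmapverts : (SimpleGraph.Subgraph.map ι.toHom M').verts = Subtype.val '' M'.verts := by
    simp only [SimpleGraph.Subgraph.map_verts]
    rfl
  have hmM : M.IsMatching := by
    refine SimpleGraph.Subgraph.IsMatching.sup
      (hM'match.map ι.toHom Subtype.val_injective)
      (SimpleGraph.Subgraph.IsMatching.subgraphOfAdj hab) ?_
    rw [(hM'match.map ι.toHom Subtype.val_injective).support_eq_verts,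
      (SimpleGraph.Subgraph.IsMatching.subgraphOfAdj hab).support_eq_verts,
      hmapverts, SimpleGraph.subgraphOfAdj_verts]
    rw [Set.disjoint_left]
    rintro x ⟨y, -, rfl⟩ hx
    rcases hx with h | h
    · exact ha1 (h ▸ y.2)
    · exact hb1 (h ▸ y.2)
  have hsupp : M.support = (Subtype.val '' M'.support) ∪ {a1, b1} := by
    rw [hmM.support_eq_verts, hM, SimpleGraph.Subgraph.verts_sup, hmapverts,
      SimpleGraph.subgraphOfAdj_verts, hM'match.support_eq_verts]
  have hacyc : (G.induce M.support).IsAcyclic := by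
    refine isAcyclic_induce_of_no_cycle ?_
    intro v c hc hsub
    rw [hsupp] at hsub
    have hb1c : b1 ∉ c.support := by
      intro hmem
      obtain ⟨y, z, hyz, hy, hz, hyc, hzc⟩ := IsCycleTwoNbrs hc hmem
      have key : ∀ w, G.Adj b1 w → w ∈ c.support → w = a1 := by
        intro w hw hwc
        rcases hsub w hwc with ⟨t, -, rfl⟩ | hw'
        · rcases hnb1 _ hw with h | h
          · exact h
          · exact absurd t.2 h
        · rcases hw' with rfl | rfl
          · rfl
          · exact absurd rfl hw.ne'
      rw [key y hy hyc, key z hz hzc] at hyz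
      exact hyz rfl
    have ha1c : a1 ∉ c.support := by
      intro hmem
      obtain ⟨y, z, hyz, hy, hz, hyc, hzc⟩ := IsCycleTwoNbrs hc hmem
      have key : ∀ w, G.Adj a1 w → w ∈ c.support → w = u := by
        intro w hw hwc
        have hwb1 : w ≠ b1 := fun h => hb1c (h ▸ hwc)
        rcases hsub w hwc with ⟨t, -, rfl⟩ | hw'
        · rcases hna1 _ hw with h | h | h
          · exact absurd h hwb1
          · exact h
          · exact absurd t.2 h
        · rcases hw' with rfl | rfl
          · exact absurd rfl hw.ne'
          · exact absurd rfl hwb1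
      rw [key y hy hyc, key z hz hzc] at hyz
      exact hyz rfl
    have hss : ∀ x ∈ c.support, x ∈ Subtype.val '' M'.support := by
      intro x hx
      rcases hsub x hx with h | h
      · exact h
      · rcases h with rfl | rfl
        · exact absurd hx ha1c
        · exact absurd hx hb1c
    have hs' : ∀ x ∈ c.support, x ∈ s := by
      intro x hx
      obtain ⟨t, -, rfl⟩ := hss x hx
      exact t.2
    have hlc : (lowerWalk G s c hs').IsCycle := by
      rw [← SimpleGraph.Walk.map_isCycle_iff_of_injective
        (f := (SimpleGraph.Embedding.induce s).toHom) (Subtype.val_injective),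
        map_lowerWalk]
      exact hc
    refine no_cycle_of_isAcyclic_induce hM'acyc _ hlc ?_
    intro x hx
    have := lowerWalk_support_sub G s c hs' x hx
    obtain ⟨t, ht, hval⟩ := hss x.1 this
    rwa [← Subtype.ext hval.symm] at ht
  have hedge : M.edgeSet.ncard = M'.edgeSet.ncard + 1 := by
    rw [hM, SimpleGraph.Subgraph.edgeSet_sup, edgeSet_map',
      SimpleGraph.edgeSet_subgraphOfAdj]
    have hcoe : (⇑ι.toHom : s → V) = Subtype.val := rfl
    rw [hcoe]
    rw [Set.union_singleton, Set.ncard_insert_of_notMem, Set.ncard_image_of_injective _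
      (Sym2.map.injective Subtype.val_injective)]
    intro h
    obtain ⟨e, -, he⟩ := h
    revert he
    refine Sym2.ind (fun x y => ?_) e
    intro he
    rw [Sym2.map_pair_eq, Sym2.eq_iff] at he
    rcases he with ⟨h1, -⟩ | ⟨-, h2⟩
    · exact ha1 (h1 ▸ x.2)
    · exact ha1 (h2 ▸ y.2)
  have h1 : acm' H = M'.edgeSet.ncard := hM'card.symm
  rw [h1, ← hedge]
  exact le_csSup (acm_set_bddAbove G) ⟨M, ⟨hmM, hacyc⟩, rfl⟩


instance : DecidableRel K4plus.Adj := fun a b =>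
  decidable_of_iff _ (SimpleGraph.fromRel_adj _ a b).symm

instance {A B : Type*} : DecidableRel (completeBipartiteGraph A B).Adj := fun a b =>
  decidable_of_iff (a.isLeft ∧ b.isRight ∨ a.isRight ∧ b.isLeft) Iff.rfl

instance : DecidableRel K23.Adj :=
  show DecidableRel (completeBipartiteGraph (Fin 2) (Fin 3)).Adj from inferInstance

instance : DecidableRel K33.Adj :=
  show DecidableRel (completeBipartiteGraph (Fin 3) (Fin 3)).Adj from inferInstance

lemma K23_min_degree : ∀ w, 2 ≤ (K23.neighborSet w).ncard := by
  intro w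
  refine two_le_ncard_of_two_nbrs ?_
  revert w
  decide

lemma K4plus_min_degree : ∀ w, 2 ≤ (K4plus.neighborSet w).ncard := by
  intro w
  refine two_le_ncard_of_two_nbrs ?_
  revert w
  decide

lemma K33_min_degree : ∀ w, 2 ≤ (K33.neighborSet w).ncard := by
  intro w
  refine two_le_ncard_of_two_nbrs ?_
  revert w
  decide

lemma kappa_eq_kappa' {V W : Type*} (G : SimpleGraph V) (H : SimpleGraph W) :
    kappa G H = kappa' G H := rfl

lemma acm_eq_acm' {V : Type*} (G : SimpleGraph V) :
    acyclicMatchingNumber G = acm' G := rfl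

end Helpers

/-- A minimum-order counterexample has no endblock isomorphic to `K_{2,3}`:
there is no set `B` of five vertices inducing a subgraph isomorphic to `K_{2,3}`
such that exactly one vertex of `B` has a neighbor outside `B`. -/
theorem stmt_3 {V : Type} [Fintype V] (G : SimpleGraph V)
    (hmin : IsMinCounterexample G) :
    ¬ ∃ B : Set V, B.ncard = 5 ∧ Nonempty ((G.induce B) ≃g K23) ∧
      (∃! u : V, u ∈ B ∧ ∃ w : V, w ∉ B ∧ G.Adj u w) := by
  classical
  rintro ⟨B, hB5, ⟨φ⟩, u, ⟨huB, w, hwB, huw⟩, huniq⟩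
  obtain ⟨hsub, hnoiso, hlt, hminimal⟩ := hmin
  -- adjacency in `K23`
  have kAdj : ∀ (i : Fin 2) (j : Fin 3), K23.Adj (Sum.inl i) (Sum.inr j) := by decide
  have kAdjRR : ∀ (j j' : Fin 3), ¬ K23.Adj (Sum.inr j) (Sum.inr j') := by decide
  have kAdjLL : ∀ (i i' : Fin 2), ¬ K23.Adj (Sum.inl i) (Sum.inl i') := by decide
  -- vertices of `B` other than `u` have all neighbors in `B`
  have F1 : ∀ x ∈ B, x ≠ u → ∀ y, G.Adj x y → y ∈ B := by
    intro x hx hxu y hxy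
    by_contra hyB
    exact hxu (huniq x ⟨hx, y, hyB, hxy⟩)
  have Fadj : ∀ (x y : B), G.Adj x.1 y.1 ↔ K23.Adj (φ x) (φ y) := by
    intro x y
    exact (φ.map_adj_iff).symm
  set U : B := ⟨u, huB⟩ with hUdef
  -- `φ u` lies on the 3-vertex side
  have hU : ∃ j, φ U = Sum.inr j := by
    cases hφU : φ U with
    | inr j => exact ⟨j, rfl⟩
    | inl i =>
      exfalso
      set v0 : V := (φ.symm (Sum.inr 0)).1
      set v1 : V := (φ.symm (Sum.inr 1)).1
      set v2 : V := (φ.symm (Sum.inr 2)).1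
      have hudj : ∀ j : Fin 3, G.Adj u (φ.symm (Sum.inr j)).1 := by
        intro j
        rw [Fadj U (φ.symm (Sum.inr j)), hφU, φ.apply_symm_apply]
        exact kAdj i j
      have hvB : ∀ j : Fin 3, (φ.symm (Sum.inr j)).1 ∈ B := fun j => (φ.symm (Sum.inr j)).2
      have hvne : ∀ j j' : Fin 3, j ≠ j' → (φ.symm (Sum.inr j)).1 ≠ (φ.symm (Sum.inr j')).1 := by
        intro j j' hjj' h
        exact hjj' (by simpa using φ.symm.injective (Subtype.ext h))
      have hsubN : ({w, v0, v1, v2} : Set V) ⊆ G.neighborSet u := by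
        rintro x (rfl | rfl | rfl | rfl)
        · exact huw
        · exact hudj 0
        · exact hudj 1
        · exact hudj 2
      have hcard : ({w, v0, v1, v2} : Set V).ncard = 4 := by
        have hw0 : w ≠ v0 := fun h => hwB (h ▸ hvB 0)
        have hw1 : w ≠ v1 := fun h => hwB (h ▸ hvB 1)
        have hw2 : w ≠ v2 := fun h => hwB (h ▸ hvB 2)
        have h01 : v0 ≠ v1 := hvne 0 1 (by decide)
        have h02 : v0 ≠ v2 := hvne 0 2 (by decide)
        have h12 : v1 ≠ v2 := hvne 1 2 (by decide)
        rw [Set.ncard_insert_of_notMem (by simp [hw0, hw1, hw2]),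
          Set.ncard_insert_of_notMem (by simp [h01, h02]),
          Set.ncard_insert_of_notMem (by simp [h12]), Set.ncard_singleton]
      have h4 : 4 ≤ (G.neighborSet u).ncard := by
        rw [← hcard]
        exact Set.ncard_le_ncard hsubN (Set.toFinite _)
      have := hsub u
      omega
  obtain ⟨ju, hφU⟩ := hU
  have hstep : ∀ j : Fin 3, ∃ jb jc : Fin 3, jb ≠ j ∧ jc ≠ j ∧ jb ≠ jc := by decide
  obtain ⟨jb, jc, hjb, hjc, hjbc⟩ := hstep ju
  set A1 : B := φ.symm (Sum.inl 0) with hA1def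
  set A2 : B := φ.symm (Sum.inl 1) with hA2def
  set B1 : B := φ.symm (Sum.inr jb) with hB1def
  set B2 : B := φ.symm (Sum.inr jc) with hB2def
  set a1 : V := A1.1
  set a2 : V := A2.1
  set b1 : V := B1.1
  set b2 : V := B2.1
  have hUsymm : φ.symm (Sum.inr ju) = U := by rw [← hφU, φ.symm_apply_apply]
  -- distinctness from u
  have hval : ∀ (x : B) (p : Fin 2 ⊕ Fin 3), φ x = p → p ≠ Sum.inr ju → x.1 ≠ u := by
    intro x p hp hne h
    apply hne
    rw [← hp]
    have : x = U := Subtype.ext h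
    rw [this, hφU]
  have ha1u : a1 ≠ u := hval A1 (Sum.inl 0) (φ.apply_symm_apply _) (by simp) 
  have ha2u : a2 ≠ u := hval A2 (Sum.inl 1) (φ.apply_symm_apply _) (by simp)
  have hb1u : b1 ≠ u := hval B1 (Sum.inr jb) (φ.apply_symm_apply _) (by simp [hjb])
  have hb2u : b2 ≠ u := hval B2 (Sum.inr jc) (φ.apply_symm_apply _) (by simp [hjc])
  set S : Set V := B \ {u} with hSdef
  set s : Set V := Sᶜ with hsdef
  have hmem_s : ∀ x, x ∈ s ↔ (x ∉ B ∨ x = u) := by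
    intro x
    simp only [hsdef, hSdef, Set.mem_compl_iff, Set.mem_diff, Set.mem_singleton_iff]
    tauto
  have ha1 : a1 ∉ s := by
    rw [hmem_s]
    push_neg
    exact ⟨A1.2, ha1u⟩
  have hb1 : b1 ∉ s := by
    rw [hmem_s]
    push_neg
    exact ⟨B1.2, hb1u⟩
  have ha2s : a2 ∉ s := by
    rw [hmem_s]
    push_neg
    exact ⟨A2.2, ha2u⟩
  have hus : u ∈ s := by rw [hmem_s]; right; rfl
  have hab : G.Adj a1 b1 := by
    rw [Fadj A1 B1, φ.apply_symm_apply, φ.apply_symm_apply]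
    exact kAdj 0 jb
  -- neighbors of b1
  have hnb1 : ∀ y, G.Adj b1 y → (y = a1 ∨ y ∉ s) := by
    intro y hy
    have hyB : y ∈ B := F1 b1 B1.2 hb1u y hy
    have hadj : K23.Adj (φ B1) (φ ⟨y, hyB⟩) := (Fadj B1 ⟨y, hyB⟩).mp hy
    rw [φ.apply_symm_apply] at hadj
    cases hY : φ ⟨y, hyB⟩ with
    | inr j => rw [hY] at hadj; exact absurd hadj (kAdjRR jb j)
    | inl i =>
      have hyi : (⟨y, hyB⟩ : B) = φ.symm (Sum.inl i) := by
        rw [← hY, φ.symm_apply_apply]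
      fin_cases i
      · left
        exact congrArg Subtype.val hyi
      · right
        have hy2 : y = a2 := congrArg Subtype.val hyi
        rw [hmem_s]
        push_neg
        exact ⟨hy2 ▸ A2.2, hy2 ▸ ha2u⟩
  -- neighbors of a1
  have hna1 : ∀ y, G.Adj a1 y → (y = b1 ∨ y = u ∨ y ∉ s) := by
    intro y hy
    have hyB : y ∈ B := F1 a1 A1.2 ha1u y hy
    have hadj : K23.Adj (φ A1) (φ ⟨y, hyB⟩) := (Fadj A1 ⟨y, hyB⟩).mp hy
    rw [φ.apply_symm_apply] at hadj
    cases hY : φ ⟨y, hyB⟩ with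
    | inl i => rw [hY] at hadj; exact absurd hadj (kAdjLL 0 i)
    | inr j =>
      have hyi : (⟨y, hyB⟩ : B) = φ.symm (Sum.inr j) := by
        rw [← hY, φ.symm_apply_apply]
      by_cases hjju : j = ju
      · right; left
        rw [hjju, hUsymm] at hyi
        exact congrArg Subtype.val hyi
      · by_cases hjjb : j = jb
        · left
          rw [hjjb] at hyi
          exact congrArg Subtype.val hyi
        · right; right
          have hdec : ∀ j3 jb3 jc3 ju3 : Fin 3, jb3 ≠ ju3 → jc3 ≠ ju3 → jb3 ≠ jc3 →
              j3 ≠ ju3 → j3 ≠ jb3 → j3 = jc3 := by decide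
          have hjjc : j = jc := hdec j jb jc ju hjb hjc hjbc hjju hjjb
          rw [hjjc] at hyi
          have hy2 : y = b2 := congrArg Subtype.val hyi
          rw [hmem_s]
          push_neg
          exact ⟨hy2 ▸ B2.2, hy2 ▸ hb2u⟩
  -- u is adjacent to a1 and a2
  have hua1 : G.Adj u a1 := by
    rw [show u = U.1 from rfl, Fadj U A1, hφU, φ.apply_symm_apply]
    exact (kAdj 0 ju).symm
  have hua2 : G.Adj u a2 := by
    rw [show u = U.1 from rfl, Fadj U A2, hφU, φ.apply_symm_apply]
    exact (kAdj 1 ju).symm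
  have ha1a2 : a1 ≠ a2 := by
    intro h
    have : A1 = A2 := Subtype.ext h
    rw [hA1def, hA2def] at this
    have := φ.symm.injective this
    simp at this
  -- closure property of s
  have hclose : ∀ a ∈ s, a ≠ u → ∀ b, G.Adj a b → b ∈ s := by
    intro a has hau b hadj
    have haB : a ∉ B := by
      rcases (hmem_s a).mp has with h | h
      · exact h
      · exact absurd h hau
    rw [hmem_s]
    by_contra hbs
    push_neg at hbs
    exact haB (F1 b hbs.1 hbs.2 a hadj.symm)
  -- degree of u in the induced graph is ≤ 1
  have hdeg : ((G.induce s).neighborSet ⟨u, hus⟩).ncard ≤ 1 := by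
    have hsub2 : ({a1, a2} : Set V) ⊆ G.neighborSet u := by
      rintro x (rfl | rfl)
      · exact hua1
      · exact hua2
    have hdiff : (G.neighborSet u \ {a1, a2}).ncard ≤ 1 := by
      rw [Set.ncard_diff hsub2 (Set.toFinite _)]
      have h2 : ({a1, a2} : Set V).ncard = 2 := Set.ncard_pair ha1a2
      have h3 := hsub u
      omega
    have hinj : ∀ y : ((G.induce s).neighborSet ⟨u, hus⟩),
        y.1.1 ∈ G.neighborSet u \ ({a1, a2} : Set V) := by
      intro y
      refine ⟨y.2, ?_⟩
      have hy_s : y.1.1 ∈ s := y.1.2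
      intro hmem
      rcases hmem with h | h
      · exact ha1 (h ▸ hy_s)
      · have h2 : y.1.1 = a2 := h
        exact ha2s (h2 ▸ hy_s)
    have hcard_le : ((G.induce s).neighborSet ⟨u, hus⟩).ncard ≤
        (G.neighborSet u \ ({a1, a2} : Set V)).ncard := by
      rw [← Nat.card_coe_set_eq, ← Nat.card_coe_set_eq]
      refine Nat.card_le_card_of_injective (fun y => ⟨y.1.1, hinj y⟩) ?_
      intro a b hab
      ext
      simpa [Subtype.ext_iff] using hab
    omega
  -- the induced graph is subcubic
  have hsubH : Subcubic (G.induce s) := by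
    intro v
    exact le_trans (ncard_neighborSet_induce_le s v) (hsub v.1)
  -- the induced graph has no isolated vertices
  have hnoisoH : NoIsolatedVerts (G.induce s) := by
    intro v
    by_cases hvu : v.1 = u
    · have hws : w ∈ s := (hmem_s w).mpr (Or.inl hwB)
      refine ⟨⟨w, hws⟩, ?_⟩
      show G.Adj v.1 w
      rw [hvu]
      exact huw
    · have hvB : v.1 ∉ B := by
        rcases (hmem_s v.1).mp v.2 with h | h
        · exact h
        · exact absurd h hvu
      obtain ⟨y, hy⟩ := hnoiso v.1
      have hys : y ∈ s := by
        rw [hmem_s]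
        by_contra hys
        push_neg at hys
        obtain ⟨hyB, hyu⟩ := hys
        exact hvB (F1 y hyB hyu v.1 hy.symm)
      exact ⟨⟨y, hys⟩, hy⟩
  -- kappa comparisons
  have hκ23 : kappa (G.induce s) K23 ≤ kappa G K23 := by
    rw [kappa_eq_kappa', kappa_eq_kappa']
    exact kappa_le G s u hus hclose hdeg K23 K23_min_degree
  have hκ4 : kappa (G.induce s) K4plus ≤ kappa G K4plus := by
    rw [kappa_eq_kappa', kappa_eq_kappa']
    exact kappa_le G s u hus hclose hdeg K4plus K4plus_min_degree
  have hκ33 : kappa (G.induce s) K33 ≤ kappa G K33 := by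
    rw [kappa_eq_kappa', kappa_eq_kappa']
    exact kappa_le G s u hus hclose hdeg K33 K33_min_degree
  -- matching number comparison
  have hν : acyclicMatchingNumber (G.induce s) + 1 ≤ acyclicMatchingNumber G := by
    rw [acm_eq_acm', acm_eq_acm']
    exact acm_lift G s a1 b1 u ha1 hb1 hab hnb1 hna1
  -- cardinalities
  have hSn : S.ncard = 4 := by
    rw [hSdef, Set.ncard_diff_singleton_of_mem huB, hB5]
  have hScard : Fintype.card S = 4 := by
    rw [← Set.toFinset_card, ← Set.ncard_eq_toFinset_card']
    exact hSn
  have hcards : Fintype.card s = Fintype.card V - 4 := by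
    have h := Fintype.card_compl_set S
    rw [hScard] at h
    convert h using 2
  have h5 : 5 ≤ Fintype.card V := by
    have h1 : B.ncard ≤ (Set.univ : Set V).ncard :=
      Set.ncard_le_ncard (Set.subset_univ _) Set.finite_univ
    rw [hB5, Set.ncard_univ, Nat.card_eq_fintype_card] at h1
    exact h1
  -- the induced graph is a smaller counterexample
  have hltH : (acyclicMatchingNumber (G.induce s) : ℚ) < acmBound (G.induce s) := by
    unfold acmBound at hlt ⊢
    have e1 : ((Fintype.card s : ℕ) : ℚ) = (Fintype.card V : ℚ) - 4 := by
      rw [hcards]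
      push_cast [Nat.cast_sub (by omega : 4 ≤ Fintype.card V)]
      ring
    rw [e1]
    have c1 : (acyclicMatchingNumber (G.induce s) : ℚ) + 1 ≤ acyclicMatchingNumber G := by
      exact_mod_cast hν
    have c2 : (kappa (G.induce s) K23 : ℚ) ≤ kappa G K23 := by exact_mod_cast hκ23
    have c3 : (kappa (G.induce s) K4plus : ℚ) ≤ kappa G K4plus := by exact_mod_cast hκ4
    have c4 : (kappa (G.induce s) K33 : ℚ) ≤ kappa G K33 := by exact_mod_cast hκ33
    linarith
  have hfinal := hminimal s (G.induce s) hsubH hnoisoH hltH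
  rw [hcards] at hfinal
  omega
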